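/- Let s ∈ (0, √2) be such that f^(k)(s) ≠ 0 for every k ≥ 0; then each s_k := f^(k)(s) lies in (0, √2), and there is a unique i_k ∈ ℤ with s_k ∈ I_{i_k}. Set σ_k = 1 if i_k ≥ 0 and σ_k = −1 if i_k < 0; set π_0 = √2 if i_0 ≥ 0 and π_0 = 0 if i_0 < 0; for n ≥ 1 set a_n = c_n · ∏_{k=0}^{n−1} σ_k, where c_n = 1 if i_n ≥ 0 and c_n = ω if i_n < 0, and set b_n = Σ_{k=0}^{n−1} |i_k|. Then the series Σ_{n≥1} a_n·β^{n+b_n} converges absolutely, and s = π_0 − Σ_{n≥1} a_n·β^{n+b_n}. -/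
import Mathlib


noncomputable section

/-- `β = √2 - 1`. -/
def β : ℝ := Real.sqrt 2 - 1

/-- `ω = √2 + 1`. -/
def ω : ℝ := Real.sqrt 2 + 1

/-- The break points `Δ_i`. -/
def Δ (i : ℤ) : ℝ :=
  if i < 0 then β ^ i.natAbs
  else if i = 0 then β
  else Real.sqrt 2 - β ^ i.natAbs

/-- The intervals `I_i`. -/
def Iint (i : ℤ) : Set ℝ :=
  if i < 0 then Set.Ioc (Δ (i - 1)) (Δ i)
  else if i = 0 then Set.Ioo β 1
  else Set.Ico (Δ i) (Δ (i + 1))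

/-- The defining formula of `f` on the interval `I_i`. -/
def fval (i : ℤ) (s : ℝ) : ℝ :=
  if i < 0 then ω ^ (i.natAbs + 1) * (Δ i - s)
  else if i = 0 then ω * (s - β)
  else ω ^ (i.natAbs + 1) * (s - Δ i)

/-- `f` is the renormalization map: `f 0 = f √2 = 0` and on each interval `I_i`
    it is given by the corresponding affine formula. These conditions determine
    `f` uniquely on `[0, √2]`. -/
def IsLuroth (f : ℝ → ℝ) : Prop :=
  f 0 = 0 ∧ f (Real.sqrt 2) = 0 ∧ ∀ i : ℤ, ∀ s ∈ Iint i, f s = fval i s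

/-- `ℚ(√2)` as a subset of `ℝ`. -/
def QSqrt2 : Set ℝ := {x | ∃ a b : ℚ, x = (a : ℝ) + (b : ℝ) * Real.sqrt 2}

/-- `ℤ[√2]` as a subset of `ℝ`. -/
def ZSqrt2 : Set ℝ := {x | ∃ m n : ℤ, x = (m : ℝ) + (n : ℝ) * Real.sqrt 2}

/-- `M_d = {s ∈ [0,√2] : d·s ∈ ℤ[√2]}`. -/
def Mset (d : ℤ) : Set ℝ :=
  {s | s ∈ Set.Icc 0 (Real.sqrt 2) ∧ (d : ℝ) * s ∈ ZSqrt2}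


lemma hsq2 : Real.sqrt 2 * Real.sqrt 2 = 2 := Real.mul_self_sqrt (by norm_num)
lemma sqrt2_lt_two : Real.sqrt 2 < 2 := by nlinarith [hsq2, Real.sqrt_nonneg 2]
lemma one_lt_sqrt2 : (1:ℝ) < Real.sqrt 2 := by nlinarith [hsq2, Real.sqrt_nonneg 2]
lemma βpos : (0:ℝ) < β := by unfold β; linarith [one_lt_sqrt2]
lemma βlt1 : β < 1 := by unfold β; linarith [sqrt2_lt_two]
lemma hβω : β * ω = 1 := by unfold β ω; nlinarith [hsq2]
lemma ωpos : (0:ℝ) < ω := by unfold ω; linarith [one_lt_sqrt2]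
lemma one_le_ω : (1:ℝ) ≤ ω := by unfold ω; linarith [one_lt_sqrt2]
lemma hω1β : ω * (1 - β) = Real.sqrt 2 := by unfold β ω; nlinarith [hsq2]
lemma βval : β = Real.sqrt 2 - 1 := rfl

lemma mem_neg' {i : ℤ} (hi : i < 0) {x : ℝ} (h : x ∈ Iint i) :
    β ^ (i.natAbs + 1) < x ∧ x ≤ β ^ i.natAbs := by
  unfold Iint at h; rw [if_pos hi] at h
  have h1 : Δ (i - 1) = β ^ (i.natAbs + 1) := by
    unfold Δ; rw [if_pos (by omega)]; congr 1; omega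
  have h2 : Δ i = β ^ i.natAbs := by unfold Δ; rw [if_pos hi]
  rw [h1, h2] at h; exact ⟨h.1, h.2⟩

lemma mem_pos' {i : ℤ} (hi : 0 < i) {x : ℝ} (h : x ∈ Iint i) :
    Real.sqrt 2 - β ^ i.natAbs ≤ x ∧ x < Real.sqrt 2 - β ^ (i.natAbs + 1) := by
  unfold Iint at h; rw [if_neg (by omega), if_neg (by omega)] at h
  have h1 : Δ i = Real.sqrt 2 - β ^ i.natAbs := by
    unfold Δ; rw [if_neg (by omega), if_neg (by omega)]
  have h2 : Δ (i + 1) = Real.sqrt 2 - β ^ (i.natAbs + 1) := by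
    unfold Δ; rw [if_neg (by omega), if_neg (by omega)]; congr 2; omega
  rw [h1, h2] at h; exact ⟨h.1, h.2⟩

lemma mem_zero' {x : ℝ} (h : x ∈ Iint 0) : β < x ∧ x < 1 := by
  unfold Iint at h; rw [if_neg (by omega), if_pos rfl] at h; exact ⟨h.1, h.2⟩

lemma pow_anti {a b : ℕ} (h : a ≤ b) : β ^ b ≤ β ^ a :=
  pow_le_pow_of_le_one βpos.le βlt1.le h

lemma mem_neg_le_β {i : ℤ} (hi : i < 0) {x : ℝ} (h : x ∈ Iint i) : x ≤ β := by
  have := (mem_neg' hi h).2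
  have h2 : β ^ i.natAbs ≤ β ^ 1 := pow_anti (by omega)
  rw [pow_one] at h2; linarith

lemma mem_pos_one_le {i : ℤ} (hi : 0 < i) {x : ℝ} (h : x ∈ Iint i) : 1 ≤ x := by
  have := (mem_pos' hi h).1
  have h2 : β ^ i.natAbs ≤ β ^ 1 := pow_anti (by omega)
  rw [pow_one] at h2; linarith [βval]

lemma Iint_unique {x : ℝ} {i j : ℤ} (hi : x ∈ Iint i) (hj : x ∈ Iint j) : i = j := by
  have βlt1' := βlt1
  rcases lt_trichotomy i 0 with hi0 | hi0 | hi0 <;>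
    rcases lt_trichotomy j 0 with hj0 | hj0 | hj0
  · -- both neg
    obtain ⟨ha1, ha2⟩ := mem_neg' hi0 hi
    obtain ⟨hb1, hb2⟩ := mem_neg' hj0 hj
    have : i.natAbs = j.natAbs := by
      rcases Nat.lt_trichotomy i.natAbs j.natAbs with h | h | h
      · have := pow_anti (show i.natAbs + 1 ≤ j.natAbs by omega); linarith
      · exact h
      · have := pow_anti (show j.natAbs + 1 ≤ i.natAbs by omega); linarith
    omega
  · subst hj0; have := mem_neg_le_β hi0 hi; have := (mem_zero' hj).1; linarith
  · have := mem_neg_le_β hi0 hi; have := mem_pos_one_le hj0 hj; linarith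
  · subst hi0; have := mem_neg_le_β hj0 hj; have := (mem_zero' hi).1; linarith
  · omega
  · subst hi0; have := (mem_zero' hi).2; have := mem_pos_one_le hj0 hj; linarith
  · have := mem_neg_le_β hj0 hj; have := mem_pos_one_le hi0 hi; linarith
  · subst hj0; have := (mem_zero' hj).2; have := mem_pos_one_le hi0 hi; linarith
  · obtain ⟨ha1, ha2⟩ := mem_pos' hi0 hi
    obtain ⟨hb1, hb2⟩ := mem_pos' hj0 hj
    have : i.natAbs = j.natAbs := by
      rcases Nat.lt_trichotomy i.natAbs j.natAbs with h | h | h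
      · have := pow_anti (show i.natAbs + 1 ≤ j.natAbs by omega); linarith
      · exact h
      · have := pow_anti (show j.natAbs + 1 ≤ i.natAbs by omega); linarith
    omega

lemma exists_pow_interval {y : ℝ} (h0 : 0 < y) (hy : y ≤ β) :
    ∃ n : ℕ, 1 ≤ n ∧ β ^ (n + 1) < y ∧ y ≤ β ^ n := by
  have hdec : DecidablePred fun n : ℕ => β ^ (n + 1) < y := fun _ => Classical.dec _
  have hex : ∃ n : ℕ, β ^ (n + 1) < y := by
    obtain ⟨n, hn⟩ := exists_pow_lt_of_lt_one h0 βlt1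
    exact ⟨n, lt_of_le_of_lt (pow_anti (by omega)) hn⟩
  set N := Nat.find hex with hN
  have hspec : β ^ (N + 1) < y := Nat.find_spec hex
  have hN1 : 1 ≤ N := by
    rcases Nat.eq_zero_or_pos N with h | h
    · exfalso; rw [h] at hspec; rw [pow_one] at hspec; linarith
    · exact h
  have hmin : ¬ β ^ (N - 1 + 1) < y := Nat.find_min hex (by omega)
  have : N - 1 + 1 = N := by omega
  rw [this] at hmin
  exact ⟨N, hN1, hspec, not_lt.mp hmin⟩

lemma exists_Iint {x : ℝ} (hx : x ∈ Set.Ioo 0 (Real.sqrt 2)) : ∃ i : ℤ, x ∈ Iint i := by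
  rcases le_or_gt x β with h | h
  · obtain ⟨n, hn1, hlt, hle⟩ := exists_pow_interval hx.1 h
    refine ⟨-(n : ℤ), ?_⟩
    unfold Iint; rw [if_pos (by omega)]
    have h1 : Δ (-(n:ℤ) - 1) = β ^ (n + 1) := by
      unfold Δ; rw [if_pos (by omega)]; congr 1; omega
    have h2 : Δ (-(n:ℤ)) = β ^ n := by
      unfold Δ; rw [if_pos (by omega)]; congr 1; omega
    rw [h1, h2]; exact ⟨hlt, hle⟩
  · rcases lt_or_ge x 1 with h1 | h1
    · refine ⟨0, ?_⟩
      unfold Iint; rw [if_neg (by omega), if_pos rfl]; exact ⟨h, h1⟩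
    · have hy0 : 0 < Real.sqrt 2 - x := by linarith [hx.2]
      have hyβ : Real.sqrt 2 - x ≤ β := by rw [βval]; linarith
      obtain ⟨n, hn1, hlt, hle⟩ := exists_pow_interval hy0 hyβ
      refine ⟨(n : ℤ), ?_⟩
      unfold Iint; rw [if_neg (by omega), if_neg (by omega)]
      have h2 : Δ (n : ℤ) = Real.sqrt 2 - β ^ n := by
        unfold Δ; rw [if_neg (by omega), if_neg (by omega)]; congr 2
      have h3 : Δ ((n : ℤ) + 1) = Real.sqrt 2 - β ^ (n + 1) := by
        unfold Δ; rw [if_neg (by omega), if_neg (by omega)]; congr 2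
      rw [h2, h3]
      exact ⟨by linarith, by linarith⟩

lemma βω_pow (m : ℕ) : β ^ m * ω ^ m = 1 := by rw [← mul_pow, hβω, one_pow]

lemma f_mem {f : ℝ → ℝ} (hf : IsLuroth f) {x : ℝ} {i : ℤ}
    (hxi : x ∈ Iint i) : f x ∈ Set.Ico 0 (Real.sqrt 2) := by
  rw [hf.2.2 i x hxi]
  unfold fval
  rcases lt_trichotomy i 0 with h | h | h
  · rw [if_pos h]
    obtain ⟨h1, h2⟩ := mem_neg' h hxi
    have hΔ : Δ i = β ^ i.natAbs := by unfold Δ; rw [if_pos h]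
    rw [hΔ]
    set m := i.natAbs with hm
    have hωp : (0:ℝ) < ω ^ (m + 1) := pow_pos ωpos _
    have hkey : ω ^ (m + 1) * (β ^ m - β ^ (m + 1)) = Real.sqrt 2 := by
      have hmm := βω_pow m
      rw [pow_succ, pow_succ]
      linear_combination (ω * (1 - β)) * hmm + hω1β
    constructor
    · exact mul_nonneg hωp.le (by linarith)
    · have hlt : ω ^ (m+1) * (β ^ m - x) < ω ^ (m+1) * (β ^ m - β ^ (m+1)) :=
        mul_lt_mul_of_pos_left (by linarith) hωp
      linarith
  · subst h
    rw [if_neg (lt_irrefl 0), if_pos rfl]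
    obtain ⟨h1, h2⟩ := mem_zero' hxi
    constructor
    · exact mul_nonneg ωpos.le (by linarith)
    · have : ω * (x - β) < ω * (1 - β) := mul_lt_mul_of_pos_left (by linarith) ωpos
      linarith [hω1β]
  · rw [if_neg (by omega), if_neg (by omega)]
    obtain ⟨h1, h2⟩ := mem_pos' h hxi
    have hΔ : Δ i = Real.sqrt 2 - β ^ i.natAbs := by
      unfold Δ; rw [if_neg (by omega), if_neg (by omega)]
    rw [hΔ]
    set m := i.natAbs with hm
    have hωp : (0:ℝ) < ω ^ (m + 1) := pow_pos ωpos _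
    have hkey : ω ^ (m + 1) * (β ^ m - β ^ (m + 1)) = Real.sqrt 2 := by
      have hmm := βω_pow m
      rw [pow_succ, pow_succ]
      linear_combination (ω * (1 - β)) * hmm + hω1β
    constructor
    · exact mul_nonneg hωp.le (by linarith)
    · have hlt : ω ^ (m+1) * (x - (Real.sqrt 2 - β ^ m)) < ω ^ (m+1) * (β ^ m - β ^ (m+1)) :=
        mul_lt_mul_of_pos_left (by linarith) hωp
      linarith

lemma iter_mem {f : ℝ → ℝ} (hf : IsLuroth f) {s : ℝ}
    (hs : s ∈ Set.Ioo 0 (Real.sqrt 2)) (hne : ∀ k : ℕ, f^[k] s ≠ 0) :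
    ∀ k : ℕ, f^[k] s ∈ Set.Ioo 0 (Real.sqrt 2) := by
  intro k
  induction k with
  | zero => simpa using hs
  | succ n ih =>
    obtain ⟨i, hi⟩ := exists_Iint ih
    have hmem := f_mem hf hi
    rw [Function.iterate_succ_apply']
    have hne' : f (f^[n] s) ≠ 0 := by
      have := hne (n + 1)
      rwa [Function.iterate_succ_apply'] at this
    exact ⟨lt_of_le_of_ne hmem.1 (Ne.symm hne'), hmem.2⟩

lemma key_rec {f : ℝ → ℝ} (hf : IsLuroth f) {x : ℝ} {i : ℤ} (hxi : x ∈ Iint i) :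
    x - (if i < 0 then 0 else Real.sqrt 2) =
      -(if i < 0 then (-1:ℝ) else 1) * β ^ i.natAbs * (1 - β * f x) := by
  have hfx : f x = fval i x := hf.2.2 i x hxi
  rcases lt_trichotomy i 0 with h | h | h
  · rw [if_pos h, if_pos h, hfx]
    unfold fval; rw [if_pos h]
    have hΔ : Δ i = β ^ i.natAbs := by unfold Δ; rw [if_pos h]
    rw [hΔ]
    set m := i.natAbs with hm
    have h1 : β ^ (m + 1) * ω ^ (m + 1) = 1 := βω_pow (m + 1)
    rw [pow_succ] at h1
    linear_combination (β ^ m - x) * h1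
  · subst h
    rw [if_neg (lt_irrefl 0), if_neg (lt_irrefl 0), hfx]
    unfold fval; rw [if_neg (lt_irrefl 0), if_pos rfl]
    simp only [Int.natAbs_zero, pow_zero]
    rw [βval, show ω = Real.sqrt 2 + 1 from rfl]
    linear_combination (-(x - Real.sqrt 2 + 1)) * hsq2
  · rw [if_neg (by omega), if_neg (by omega), hfx]
    unfold fval; rw [if_neg (by omega), if_neg (by omega)]
    have hΔ : Δ i = Real.sqrt 2 - β ^ i.natAbs := by
      unfold Δ; rw [if_neg (by omega), if_neg (by omega)]
    rw [hΔ]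
    set m := i.natAbs with hm
    have h1 : β ^ (m + 1) * ω ^ (m + 1) = 1 := βω_pow (m + 1)
    rw [pow_succ] at h1
    linear_combination (-(x - Real.sqrt 2 + β ^ m)) * h1

/-- The `n`-th term of the Lüroth series (corresponding to `a_{n+1} β^{(n+1)+b_{n+1}}`). -/
def lterm (idx : ℕ → ℤ) (n : ℕ) : ℝ :=
  (if idx (n + 1) < 0 then ω else 1) *
    (∏ k ∈ Finset.range (n + 1), (if idx k < 0 then (-1 : ℝ) else 1)) *
    β ^ ((n + 1) + ∑ k ∈ Finset.range (n + 1), (idx k).natAbs)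

/-- The error term. -/
def Eterm (f : ℝ → ℝ) (idx : ℕ → ℤ) (s : ℝ) (n : ℕ) : ℝ :=
  (∏ k ∈ Finset.range n, (if idx k < 0 then (-1 : ℝ) else 1)) *
    β ^ (n + ∑ k ∈ Finset.range n, (idx k).natAbs) *
    (f^[n] s - (if idx n < 0 then 0 else Real.sqrt 2))

lemma hβ2 : β * Real.sqrt 2 + β = 1 := by
  rw [βval]; linear_combination hsq2

lemma Estep {f : ℝ → ℝ} (hf : IsLuroth f) {s : ℝ} {idx : ℕ → ℤ}
    (hidx : ∀ k : ℕ, f^[k] s ∈ Iint (idx k)) (n : ℕ) :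
    Eterm f idx s n - Eterm f idx s (n + 1) = -(lterm idx n) := by
  have hk := key_rec hf (hidx n)
  unfold Eterm lterm
  rw [Function.iterate_succ_apply']
  rw [hk]
  rw [Finset.prod_range_succ, Finset.sum_range_succ]
  set S := ∏ k ∈ Finset.range n, (if idx k < 0 then (-1:ℝ) else 1) with hS
  set B := ∑ k ∈ Finset.range n, (idx k).natAbs with hB
  set m := (idx n).natAbs with hm
  set x := f (f^[n] s) with hx
  set σ := (if idx n < 0 then (-1:ℝ) else 1) with hσ
  rw [show n + 1 + (B + m) = (n + B) + m + 1 by ring, pow_succ, pow_add]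
  by_cases hc : idx (n + 1) < 0
  · rw [if_pos hc, if_pos hc]
    linear_combination (S * σ * β ^ (n + B) * β ^ m) * hβω
  · rw [if_neg hc, if_neg hc]
    linear_combination (S * σ * β ^ (n + B) * β ^ m) * hβ2

lemma Etel {f : ℝ → ℝ} (hf : IsLuroth f) {s : ℝ} {idx : ℕ → ℤ}
    (hidx : ∀ k : ℕ, f^[k] s ∈ Iint (idx k)) (n : ℕ) :
    ∑ j ∈ Finset.range n, lterm idx j = Eterm f idx s n - Eterm f idx s 0 := by
  induction n with
  | zero => simp
  | succ n ih =>
    rw [Finset.sum_range_succ, ih]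
    have := Estep hf hidx n
    linarith

lemma Eterm_zero (f : ℝ → ℝ) (idx : ℕ → ℤ) (s : ℝ) :
    Eterm f idx s 0 = s - (if idx 0 < 0 then 0 else Real.sqrt 2) := by
  simp [Eterm]

lemma abs_prod_one (idx : ℕ → ℤ) (n : ℕ) :
    |∏ k ∈ Finset.range n, (if idx k < 0 then (-1:ℝ) else 1)| = 1 := by
  rw [Finset.abs_prod]
  apply Finset.prod_eq_one
  intro k _
  split <;> simp

lemma Eabs (f : ℝ → ℝ) (idx : ℕ → ℤ) (s : ℝ) (n : ℕ)
    (hn : f^[n] s ∈ Set.Ioo 0 (Real.sqrt 2)) :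
    ‖Eterm f idx s n‖ ≤ Real.sqrt 2 * β ^ n := by
  rw [Real.norm_eq_abs]
  unfold Eterm
  rw [abs_mul, abs_mul, abs_prod_one, one_mul, abs_of_nonneg (pow_nonneg βpos.le _)]
  have hd : |f^[n] s - (if idx n < 0 then 0 else Real.sqrt 2)| ≤ Real.sqrt 2 := by
    rw [abs_le]
    split
    · constructor <;> linarith [hn.1, hn.2]
    · constructor <;> linarith [hn.1, hn.2]
  calc β ^ (n + ∑ k ∈ Finset.range n, (idx k).natAbs) *
        |f^[n] s - (if idx n < 0 then 0 else Real.sqrt 2)|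
      ≤ β ^ n * Real.sqrt 2 :=
        mul_le_mul (pow_anti (Nat.le_add_right _ _)) hd (abs_nonneg _) (pow_nonneg βpos.le _)
    _ = Real.sqrt 2 * β ^ n := mul_comm _ _

/-- the Lüroth expansion. If `s ∈ (0,√2)` has `f^[k] s ≠ 0` for
all `k`, then every iterate lies in `(0,√2)` and belongs to a unique interval
`I_{i_k}`; moreover, for any itinerary `idx` (i.e. `f^[k] s ∈ I_{idx k}`), the
series `∑_{n ≥ 1} a_n β^(n + b_n)` converges absolutely and
`s = π₀ - ∑_{n ≥ 1} a_n β^(n + b_n)`, where `a_n = c_n ∏_{k<n} σ_k`,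
`c_n = ω` if `idx n < 0` and `1` otherwise, `σ_k = -1` if `idx k < 0` and `1`
otherwise, `b_n = ∑_{k<n} |idx k|`, and `π₀ = 0` if `idx 0 < 0`, `√2`
otherwise. -/
theorem luroth_expansion (f : ℝ → ℝ) (hf : IsLuroth f)
    (s : ℝ) (hs : s ∈ Set.Ioo (0 : ℝ) (Real.sqrt 2))
    (hne : ∀ k : ℕ, f^[k] s ≠ 0) :
    (∀ k : ℕ, f^[k] s ∈ Set.Ioo (0 : ℝ) (Real.sqrt 2)) ∧
    (∀ k : ℕ, ∃! i : ℤ, f^[k] s ∈ Iint i) ∧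
    (∀ idx : ℕ → ℤ, (∀ k : ℕ, f^[k] s ∈ Iint (idx k)) →
      Summable (fun n : ℕ =>
        |(if idx (n + 1) < 0 then ω else 1) *
            (∏ k ∈ Finset.range (n + 1), (if idx k < 0 then (-1 : ℝ) else 1)) *
            β ^ ((n + 1) + ∑ k ∈ Finset.range (n + 1), (idx k).natAbs)|) ∧
      s = (if idx 0 < 0 then (0 : ℝ) else Real.sqrt 2) -
        ∑' n : ℕ,
          (if idx (n + 1) < 0 then ω else 1) *
            (∏ k ∈ Finset.range (n + 1), (if idx k < 0 then (-1 : ℝ) else 1)) *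
            β ^ ((n + 1) + ∑ k ∈ Finset.range (n + 1), (idx k).natAbs)) := by
  have hmem := iter_mem hf hs hne
  refine ⟨hmem, fun k => ?_, fun idx hidx => ?_⟩
  · obtain ⟨i, hi⟩ := exists_Iint (hmem k)
    exact ⟨i, hi, fun j hj => Iint_unique hj hi⟩
  · have habs : ∀ n, |lterm idx n| ≤ (ω * β) * β ^ n := by
      intro n
      unfold lterm
      rw [abs_mul, abs_mul, abs_prod_one, mul_one, abs_of_nonneg (pow_nonneg βpos.le _)]
      have h1 : |if idx (n + 1) < 0 then ω else 1| ≤ ω := by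
        split
        · rw [abs_of_pos ωpos]
        · rw [abs_one]; exact one_le_ω
      have h2 : β ^ (n + 1 + ∑ k ∈ Finset.range (n + 1), (idx k).natAbs) ≤ β ^ (n + 1) :=
        pow_anti (by omega)
      calc |if idx (n + 1) < 0 then ω else 1| *
            β ^ (n + 1 + ∑ k ∈ Finset.range (n + 1), (idx k).natAbs)
          ≤ ω * β ^ (n + 1) := mul_le_mul h1 h2 (pow_nonneg βpos.le _) ωpos.le
        _ = (ω * β) * β ^ n := by rw [pow_succ]; ring
    have hsum_abs : Summable (fun n => |lterm idx n|) := by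
      refine Summable.of_nonneg_of_le (fun n => abs_nonneg _) habs ?_
      exact (summable_geometric_of_lt_one βpos.le βlt1).mul_left _
    refine ⟨hsum_abs, ?_⟩
    have hsum : Summable (lterm idx) := summable_abs_iff.mp hsum_abs
    have h1 : Filter.Tendsto (fun n => ∑ j ∈ Finset.range n, lterm idx j)
        Filter.atTop (nhds (∑' n, lterm idx n)) := hsum.hasSum.tendsto_sum_nat
    have hE0 : Filter.Tendsto (fun n => Eterm f idx s n) Filter.atTop (nhds 0) := by
      apply squeeze_zero_norm (fun n => Eabs f idx s n (hmem n))
      have := tendsto_pow_atTop_nhds_zero_of_lt_one βpos.le βlt1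
      simpa using this.const_mul (Real.sqrt 2)
    have h2 : Filter.Tendsto (fun n => ∑ j ∈ Finset.range n, lterm idx j)
        Filter.atTop (nhds (0 - Eterm f idx s 0)) := by
      have heq : (fun n => ∑ j ∈ Finset.range n, lterm idx j)
          = fun n => Eterm f idx s n - Eterm f idx s 0 := funext (Etel hf hidx)
      rw [heq]
      exact hE0.sub_const _
    have huniq := tendsto_nhds_unique h1 h2
    rw [Eterm_zero] at huniq
    show s = (if idx 0 < 0 then (0 : ℝ) else Real.sqrt 2) - ∑' n : ℕ, lterm idx n
    rw [huniq]
    ring
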